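/- (Specker's theorem) The ℤ-module Hom_ℤ(∏_{n ∈ ℕ} ℤ, ℤ) is isomorphic to ⊕_{n ∈ ℕ} ℤ: every group homomorphism from the Baer–Specker group ∏_ℕ ℤ to ℤ is a finite ℤ-linear combination of the coordinate projections. -/

import Mathlib

/-- Strictly increasing sequence in an infinite set of naturals. -/
noncomputable def nseq (S : Set ℕ) (hS : S.Infinite) : ℕ → ℕ
  | 0 => (hS.exists_gt 0).choose
  | (j+1) => (hS.exists_gt (nseq S hS j)).choose

theorem nseq_mem (S : Set ℕ) (hS : S.Infinite) : ∀ j, nseq S hS j ∈ S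
  | 0 => (hS.exists_gt 0).choose_spec.1
  | (j+1) => (hS.exists_gt (nseq S hS j)).choose_spec.1

theorem nseq_lt (S : Set ℕ) (hS : S.Infinite) (j : ℕ) :
    nseq S hS j < nseq S hS (j+1) :=
  (hS.exists_gt (nseq S hS j)).choose_spec.2

theorem nseq_strictMono (S : Set ℕ) (hS : S.Infinite) : StrictMono (nseq S hS) :=
  strictMono_nat_of_lt_succ (nseq_lt S hS)

/-- The pair (partial sum P, required divisor R) recursion. -/
noncomputable def PR (g : ℕ → ℤ) : ℕ → ℤ × ℤ
  | 0 => (0, 1)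
  | (j+1) =>
    ((PR g j).1 + (PR g j).2 * g j,
     (PR g j).2 * (3 * |(PR g j).1 + (PR g j).2 * g j| + 1))

theorem R_pos (g : ℕ → ℤ) : ∀ j, 0 < (PR g j).2
  | 0 => one_pos
  | (j+1) => by
    have := R_pos g j
    have h2 : (0:ℤ) < 3 * |(PR g j).1 + (PR g j).2 * g j| + 1 := by positivity
    exact mul_pos this h2

theorem R_dvd_succ (g : ℕ → ℤ) (j : ℕ) : (PR g j).2 ∣ (PR g (j+1)).2 :=
  dvd_mul_right _ _

theorem R_dvd (g : ℕ → ℤ) {j k : ℕ} (h : j ≤ k) : (PR g j).2 ∣ (PR g k).2 := by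
  induction k with
  | zero => simp_all
  | succ k ih =>
    rcases Nat.lt_or_ge j (k+1) with h' | h'
    · exact (ih (Nat.lt_succ_iff.mp h')).trans (dvd_mul_right _ _)
    · have : j = k + 1 := le_antisymm h h'
      rw [this]

theorem R_ge (g : ℕ → ℤ) : ∀ j, 3 * |(PR g j).1| + 1 ≤ (PR g j).2
  | 0 => by simp [PR]
  | (j+1) => by
    have h1 : (1:ℤ) ≤ (PR g j).2 := R_pos g j
    show 3 * |(PR g j).1 + (PR g j).2 * g j| + 1 ≤
      (PR g j).2 * (3 * |(PR g j).1 + (PR g j).2 * g j| + 1)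
    nlinarith [abs_nonneg ((PR g j).1 + (PR g j).2 * g j)]

theorem P_grow (g : ℕ → ℤ) (hg : ∀ j, g j ≠ 0) (j : ℕ) :
    |(PR g j).1| + 1 ≤ |(PR g (j+1)).1| := by
  have hR := R_ge g j
  have hgj : 1 ≤ |g j| := Int.one_le_abs (by simpa using hg j)
  have hRpos : (0:ℤ) < (PR g j).2 := R_pos g j
  show |(PR g j).1| + 1 ≤ |(PR g j).1 + (PR g j).2 * g j|
  have h1 : (PR g j).2 ≤ |(PR g j).2 * g j| := by
    rw [abs_mul, abs_of_pos hRpos]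
    nlinarith
  have h2 : |(PR g j).2 * g j| - |(PR g j).1| ≤ |(PR g j).1 + (PR g j).2 * g j| := by
    have := abs_add_le ((PR g j).1 + (PR g j).2 * g j) (-(PR g j).1)
    simp at this
    linarith [abs_neg ((PR g j).1), abs_mul ((PR g j).2) (g j)]
  linarith

theorem P_ge (g : ℕ → ℤ) (hg : ∀ j, g j ≠ 0) : ∀ j : ℕ, (j : ℤ) ≤ |(PR g j).1| := by
  intro j
  induction j with
  | zero => simp
  | succ j ih =>
    have := P_grow g hg j
    push_cast
    linarith

theorem P_eq_sum (g : ℕ → ℤ) (j : ℕ) :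
    (PR g j).1 = ∑ i ∈ Finset.range j, (PR g i).2 * g i := by
  induction j with
  | zero => simp [PR]
  | succ j ih => rw [Finset.sum_range_succ, ← ih]; rfl

theorem claimA (φ : (∀ _ : ℕ, ℤ) →ₗ[ℤ] ℤ) :
    {n : ℕ | φ (Pi.single n 1) ≠ 0}.Finite := by
  by_contra hfin
  have hS : {n : ℕ | φ (Pi.single n 1) ≠ 0}.Infinite := hfin
  set S := {n : ℕ | φ (Pi.single n 1) ≠ 0} with hSdef
  set ns := nseq S hS with hns
  set g : ℕ → ℤ := fun j => φ (Pi.single (ns j) 1) with hgdef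
  have hg : ∀ j, g j ≠ 0 := fun j => nseq_mem S hS j
  have hinj : Function.Injective ns := (nseq_strictMono S hS).injective
  classical
  set x : ℕ → ℤ := fun k => if h : ∃ j, ns j = k then (PR g h.choose).2 else 0 with hxdef
  have hx : ∀ j, x (ns j) = (PR g j).2 := by
    intro j
    have h : ∃ i, ns i = ns j := ⟨j, rfl⟩
    simp only [hxdef, dif_pos h]
    rw [hinj h.choose_spec]
  have key : ∀ j, ∃ t, φ x = (PR g j).1 + (PR g j).2 * t := by
    intro j
    set s : ∀ _ : ℕ, ℤ := ∑ i ∈ Finset.range j, (PR g i).2 • Pi.single (ns i) 1 with hs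
    have hφs : φ s = (PR g j).1 := by
      rw [hs, map_sum, P_eq_sum]
      apply Finset.sum_congr rfl
      intro i _
      rw [map_smul, smul_eq_mul]
    have hsk : ∀ i0 : ℕ, s (ns i0) = if i0 ∈ Finset.range j then (PR g i0).2 else 0 := by
      intro i0
      rw [hs, Finset.sum_apply]
      rw [← Finset.sum_ite_eq' (Finset.range j) i0 (fun i => (PR g i).2)]
      apply Finset.sum_congr rfl
      intro i _
      simp only [Pi.smul_apply, Pi.single_apply, smul_eq_mul, hinj.eq_iff]
      by_cases h : i0 = i <;> simp [h, eq_comm]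
    have hsk0 : ∀ k, (¬ ∃ i, ns i = k) → s k = 0 := by
      intro k hk
      push_neg at hk
      rw [hs, Finset.sum_apply]
      apply Finset.sum_eq_zero
      intro i _
      simp [Pi.single_apply, (hk i).symm, Ne.symm (hk i)]
    have hdvd : ∀ k, (PR g j).2 ∣ x k - s k := by
      intro k
      by_cases h : ∃ i, ns i = k
      · obtain ⟨i0, rfl⟩ := h
        rw [hx i0, hsk i0]
        by_cases hij : i0 ∈ Finset.range j
        · simp [Finset.mem_range.mp hij]
        · simp only [if_neg hij, sub_zero]
          exact R_dvd g (le_of_not_gt (fun hc => hij (Finset.mem_range.mpr hc)))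
      · have : x k = 0 := dif_neg h
        rw [this, hsk0 k h, sub_zero]
        exact dvd_zero _
    set w : ∀ _ : ℕ, ℤ := fun k => (x k - s k) / (PR g j).2 with hw
    have hxw : x = s + (PR g j).2 • w := by
      funext k
      have := Int.mul_ediv_cancel' (hdvd k)
      simp only [Pi.add_apply, Pi.smul_apply, hw, smul_eq_mul]
      omega
    refine ⟨φ w, ?_⟩
    rw [hxw, map_add, map_smul, hφs, smul_eq_mul]
  have habs : ∀ j : ℕ, (j : ℤ) ≤ |φ x| := by
    intro j
    obtain ⟨t, ht⟩ := key j
    have hPj := P_ge g hg j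
    have hRj := R_ge g j
    rcases eq_or_ne t 0 with h | h
    · rw [ht, h, mul_zero, add_zero]; exact hPj
    · have h1 : 1 ≤ |t| := Int.one_le_abs h
      have h2 : (PR g j).2 ≤ |(PR g j).2 * t| := by
        rw [abs_mul, abs_of_pos (R_pos g j)]
        nlinarith [R_pos g j]
      have h3 : |(PR g j).2 * t| - |(PR g j).1| ≤ |φ x| := by
        have h4 := abs_sub_abs_le_abs_sub ((PR g j).2 * t) (-(PR g j).1)
        rw [abs_neg, sub_neg_eq_add, add_comm] at h4
        rw [ht]
        linarith
      linarith
  have := habs ((φ x).natAbs + 1)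
  rw [Int.abs_eq_natAbs] at this
  push_cast at this
  linarith

theorem phi_finsupp_zero (φ : (∀ _ : ℕ, ℤ) →ₗ[ℤ] ℤ)
    (hφ : ∀ n, φ (Pi.single n 1) = 0) :
    ∀ (m : ℕ) (x : ∀ _ : ℕ, ℤ), (∀ n, m ≤ n → x n = 0) → φ x = 0 := by
  intro m
  induction m with
  | zero =>
    intro x hx
    have : x = 0 := funext fun n => hx n (Nat.zero_le n)
    rw [this, map_zero]
  | succ m ih =>
    intro x hx
    have h1 : φ (x - x m • Pi.single m 1) = 0 := by
      apply ih
      intro n hn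
      rcases eq_or_lt_of_le hn with h | h
      · simp [← h, Pi.single_apply]
      · have : x n = 0 := hx n h
        simp [this, Pi.single_apply, Nat.ne_of_gt h]
    have h2 : φ (x - x m • Pi.single m 1) = φ x - x m * φ (Pi.single m 1) := by
      rw [map_sub, map_smul]; simp
    rw [h2, hφ] at h1
    linarith

theorem phi_div_zero (φ : (∀ _ : ℕ, ℤ) →ₗ[ℤ] ℤ)
    (hφ : ∀ n, φ (Pi.single n 1) = 0) (d : ℤ) (hd : 2 ≤ d)
    (y : ∀ _ : ℕ, ℤ) (h : ∀ n, d ^ n ∣ y n) : φ y = 0 := by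
  have key : ∀ m : ℕ, d ^ m ∣ φ y := by
    intro m
    set w : ∀ _ : ℕ, ℤ := fun n => if m ≤ n then y n / d ^ m else 0 with hw
    have hdec : φ (y - d ^ m • w) = 0 := by
      apply phi_finsupp_zero φ hφ m
      intro n hn
      have hdvd : d ^ m ∣ y n := dvd_trans (pow_dvd_pow d hn) (h n)
      simp only [Pi.sub_apply, Pi.smul_apply, hw, if_pos hn, smul_eq_mul]
      rw [Int.mul_ediv_cancel' hdvd]; ring
    have : φ y = d ^ m * φ w := by
      rw [map_sub, map_smul, smul_eq_mul] at hdec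
      linarith
    exact ⟨φ w, this⟩
  by_contra hne
  obtain ⟨m, hm⟩ := pow_unbounded_of_one_lt (|φ y|) (by linarith : (1:ℤ) < d)
  have h2 : d ^ m ≤ |φ y| :=
    Int.le_of_dvd (abs_pos.mpr hne) ((dvd_abs _ _).mpr (key m))
  linarith

theorem phi_zero (φ : (∀ _ : ℕ, ℤ) →ₗ[ℤ] ℤ)
    (hφ : ∀ n, φ (Pi.single n 1) = 0) : φ = 0 := by
  ext x
  have hex : ∀ n : ℕ, ∃ a b : ℤ, x n = 2 ^ n * a + 3 ^ n * b := by
    intro n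
    have hcop : IsCoprime (2 ^ n : ℤ) (3 ^ n : ℤ) :=
      (Int.isCoprime_iff_gcd_eq_one.mpr (by norm_num)).pow
    obtain ⟨u, v, huv⟩ := hcop
    exact ⟨u * x n, v * x n, by linear_combination (- x n) * huv⟩
  choose a b hab using hex
  have hx : x = (fun n => 2 ^ n * a n) + (fun n => 3 ^ n * b n) := by
    funext n; exact hab n
  rw [LinearMap.zero_apply, hx, map_add,
    phi_div_zero φ hφ 2 le_rfl _ (fun n => ⟨a n, rfl⟩),
    phi_div_zero φ hφ 3 (by norm_num) _ (fun n => ⟨b n, rfl⟩)]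
  ring


noncomputable def Theta : (ℕ →₀ ℤ) →ₗ[ℤ] ((∀ _ : ℕ, ℤ) →ₗ[ℤ] ℤ) :=
  Finsupp.lsum ℤ fun n => LinearMap.toSpanSingleton ℤ _ (LinearMap.proj n)

theorem Theta_apply (a : ℕ →₀ ℤ) (x : ∀ _ : ℕ, ℤ) :
    Theta a x = a.sum fun n c => c * x n := by
  simp [Theta, Finsupp.lsum_apply, Finsupp.sum_apply']

theorem Theta_single (a : ℕ →₀ ℤ) (n : ℕ) : Theta a (Pi.single n 1) = a n := by
  classical
  rw [Theta_apply]
  simp [Pi.single_apply, Finsupp.sum_ite_eq']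
  intro h
  omega

/-- (Specker's theorem) `Hom_ℤ(∏_{n ∈ ℕ} ℤ, ℤ) ≅ ⊕_{n ∈ ℕ} ℤ`: every group
homomorphism from the Baer–Specker group to `ℤ` is a finite `ℤ`-linear
combination of the coordinate projections. -/
theorem stmt_6 :
    ∃ Θ : (ℕ →₀ ℤ) →ₗ[ℤ] ((∀ _ : ℕ, ℤ) →ₗ[ℤ] ℤ),
      (∀ (a : ℕ →₀ ℤ) (x : ∀ _ : ℕ, ℤ), Θ a x = a.sum fun n c => c * x n) ∧
      Function.Bijective Θ := by
  classical
  refine ⟨Theta, Theta_apply, ?_, ?_⟩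
  · -- injective
    intro a b hab
    ext n
    have h : Theta a (Pi.single n 1) = Theta b (Pi.single n 1) := by rw [hab]
    rwa [Theta_single, Theta_single] at h
  · -- surjective
    intro φ
    have hfin := claimA φ
    refine ⟨Finsupp.onFinset hfin.toFinset (fun n => φ (Pi.single n 1))
      (fun n h => hfin.mem_toFinset.mpr h), ?_⟩
    set a : ℕ →₀ ℤ := Finsupp.onFinset hfin.toFinset (fun n => φ (Pi.single n 1))
      (fun n h => hfin.mem_toFinset.mpr h) with ha
    have hker : ∀ n, (Theta a - φ) (Pi.single n 1) = 0 := by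
      intro n
      rw [LinearMap.sub_apply, Theta_single, ha, Finsupp.onFinset_apply, sub_self]
    have hz := phi_zero (Theta a - φ) hker
    have := sub_eq_zero.mp hz
    exact this
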